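/- Let ι be a finite set of m items with nonnegative values v : ι → ℝ. Let σ : {1, …, m} → ι be a bijection enumerating the items in non-increasing value order (v(σ(k)) ≥ v(σ(k+1)) for all k), and let π : {1, …, m} → ι be any bijection (the predicted ordering). Let d ≥ 0 be a real number at least the number of unordered pairs of items whose relative order under σ and under π disagree. Let q ≥ ⌊m/2⌋ and let a : {1, …, q} → ι be injective such that for every ℓ the item a(ℓ) is among the top 2ℓ items of the predicted ordering, i.e., π⁻¹(a(ℓ)) ≤ 2ℓ. Let A = {a(1), …, a(q)} and let R = {σ(2k) : 1 ≤ k ≤ ⌊m/2⌋} be the set of items in even positions of the true ordering. Then for every threshold τ ≥ 0: |{j ∈ A : v(j) ≥ τ}| ≥ |{j ∈ R : v(j) ≥ τ}| − √d. -/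

import Mathlib

/-- Card of an initial segment of `Fin n`. -/
lemma aux_card_filter_lt (n c : ℕ) (hc : c ≤ n) :
    (Finset.filter (fun k : Fin n => (k : ℕ) < c) Finset.univ).card = c := by
  have h : (Finset.filter (fun k : Fin n => (k : ℕ) < c) Finset.univ).card =
      (Finset.range c).card := by
    apply Finset.card_bij (fun (k : Fin n) _ => (k : ℕ))
    · intro k hk
      simp only [Finset.mem_filter, Finset.mem_univ, true_and] at hk
      simpa using hk
    · intro k _ k' _ h
      exact Fin.ext h
    · intro n' hn'
      simp only [Finset.mem_range] at hn'
      exact ⟨⟨n', lt_of_lt_of_le hn' hc⟩, by simpa using hn', rfl⟩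
  simpa using h

lemma aux_card_odd (t : ℕ) :
    ((Finset.range t).filter (fun k => (k + 1) % 2 = 0)).card = t / 2 := by
  induction t with
  | zero => simp
  | succ n ih =>
    rw [Finset.range_add_one, Finset.filter_insert]
    by_cases h : (n + 1) % 2 = 0
    · rw [if_pos h, Finset.card_insert_of_notMem (by simp), ih]
      omega
    · rw [if_neg h, ih]
      omega

lemma aux_sum_sq : ∀ (h : ℕ) (N : Finset ℕ), N.card = h → h * h ≤ ∑ n ∈ N, (2 * n + 1) := by
  intro h
  induction h with
  | zero => intro N _; exact Nat.zero_le _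
  | succ m ih =>
    intro N hN
    have hne : N.Nonempty := Finset.card_pos.mp (by omega)
    set M := N.max' hne with hMdef
    have hMmem := N.max'_mem hne
    have hM : m ≤ M := by
      by_contra hc
      push_neg at hc
      have hsub : N ⊆ Finset.range (M + 1) :=
        fun x hx => Finset.mem_range.mpr (Nat.lt_succ_of_le (N.le_max' x hx))
      have := Finset.card_le_card hsub
      rw [Finset.card_range, hN] at this
      omega
    have herase : (N.erase M).card = m := by
      rw [Finset.card_erase_of_mem hMmem, hN]
      omega
    have hih := ih (N.erase M) herase
    have hsum : (2 * M + 1) + ∑ n ∈ N.erase M, (2 * n + 1) = ∑ n ∈ N, (2 * n + 1) :=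
      Finset.add_sum_erase N (fun n => 2 * n + 1) hMmem
    nlinarith

/-- If the Kendall tau distance between the true ordering `σ` (non-increasing in value)
and the predicted ordering `π` is at most `d`, and `a(1), …, a(q)` are distinct items such
that `a(ℓ)` is among the top `2ℓ` items of the predicted ordering, then for every
threshold `τ ≥ 0` the threshold count of `A = {a(1), …, a(q)}` is within an additive
`√d` of the threshold count of the even-position bundle `R = {σ(2k) : 1 ≤ k ≤ ⌊m/2⌋}`. -/
theorem round_robin_noisy_threshold_bound
    {ι : Type*} [Fintype ι] [DecidableEq ι]
    (m : ℕ) (hcard : Fintype.card ι = m)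
    (v : ι → ℝ) (hv : ∀ j, 0 ≤ v j)
    (σ : Fin m ≃ ι) (hσ : ∀ k l : Fin m, k ≤ l → v (σ l) ≤ v (σ k))
    (π : Fin m ≃ ι)
    (d : ℝ) (hd0 : 0 ≤ d)
    (hd : ((Finset.univ.filter
        (fun p : Fin m × Fin m => p.1 < p.2 ∧ π.symm (σ p.2) < π.symm (σ p.1))).card : ℝ) ≤ d)
    (q : ℕ) (hq : m / 2 ≤ q)
    (a : Fin q → ι) (ha : Function.Injective a)
    (haRR : ∀ ℓ : Fin q, (π.symm (a ℓ) : ℕ) < 2 * ((ℓ : ℕ) + 1))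
    (A R : Finset ι)
    (hA : A = Finset.univ.image a)
    (hR : R = (Finset.univ.filter (fun k : Fin m => ((k : ℕ) + 1) % 2 = 0)).image σ) :
    ∀ τ : ℝ, 0 ≤ τ →
      ((R.filter (fun j => τ ≤ v j)).card : ℝ) - Real.sqrt d ≤
        ((A.filter (fun j => τ ≤ v j)).card : ℝ) := by
  intro τ hτ
  classical
  set In := Finset.univ.filter
      (fun p : Fin m × Fin m => p.1 < p.2 ∧ π.symm (σ p.2) < π.symm (σ p.1)) with hIn
  set t := (Finset.univ.filter (fun k : Fin m => τ ≤ v (σ k))).card with ht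
  have htm : t ≤ m := by
    have := Finset.card_filter_le (Finset.univ : Finset (Fin m))
        (fun k => τ ≤ v (σ k))
    simpa using this
  -- the above-threshold positions form an initial segment
  have hAiff : ∀ k : Fin m, τ ≤ v (σ k) ↔ (k : ℕ) < t := by
    intro k
    constructor
    · intro hk
      have hsub : Finset.Iic k ⊆ Finset.univ.filter (fun l : Fin m => τ ≤ v (σ l)) := by
        intro l hl
        simp only [Finset.mem_filter, Finset.mem_univ, true_and]
        exact le_trans hk (hσ l k (Finset.mem_Iic.mp hl))
      have hc := Finset.card_le_card hsub
      rw [Fin.card_Iic] at hc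
      omega
    · intro hk
      by_contra hc
      have hsub : Finset.univ.filter (fun l : Fin m => τ ≤ v (σ l)) ⊆ Finset.Iio k := by
        intro l hl
        simp only [Finset.mem_filter, Finset.mem_univ, true_and] at hl
        rw [Finset.mem_Iio]
        by_contra hlk
        push_neg at hlk
        exact hc (le_trans hl (hσ k l hlk))
      have hcc := Finset.card_le_card hsub
      rw [Fin.card_Iio] at hcc
      omega
  -- the R-count equals t / 2
  have hRcount : (R.filter (fun j => τ ≤ v j)).card = t / 2 := by
    rw [hR, Finset.filter_image, Finset.card_image_of_injOn (σ.injective.injOn),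
      Finset.filter_filter]
    rw [← aux_card_odd t]
    apply Finset.card_bij (fun (k : Fin m) _ => (k : ℕ))
    · intro k hk
      simp only [Finset.mem_filter, Finset.mem_univ, true_and] at hk
      simp only [Finset.mem_filter, Finset.mem_range]
      exact ⟨(hAiff k).mp hk.2, hk.1⟩
    · intro k _ k' _ h
      exact Fin.ext h
    · intro n hn
      simp only [Finset.mem_filter, Finset.mem_range] at hn
      refine ⟨⟨n, lt_of_lt_of_le hn.1 htm⟩, ?_, rfl⟩
      simp only [Finset.mem_filter, Finset.mem_univ, true_and]
      exact ⟨hn.2, (hAiff _).mpr hn.1⟩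
  -- good/bad split among the first t/2 picks
  set G := Finset.univ.filter (fun ℓ : Fin q => (ℓ : ℕ) < t / 2 ∧ τ ≤ v (a ℓ)) with hG
  set L := Finset.univ.filter (fun ℓ : Fin q => (ℓ : ℕ) < t / 2 ∧ ¬ τ ≤ v (a ℓ)) with hLdef
  have hq2 : t / 2 ≤ q := le_trans (Nat.div_le_div_right htm) hq
  have hGL : G.card + L.card = t / 2 := by
    have h1 : (Finset.filter (fun ℓ : Fin q => (ℓ : ℕ) < t / 2) Finset.univ).card = t / 2 :=
      aux_card_filter_lt q (t / 2) hq2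
    rw [← h1, hG, hLdef, ← Finset.filter_filter, ← Finset.filter_filter]
    exact Finset.card_filter_add_card_filter_not
      (s := Finset.filter (fun ℓ : Fin q => (ℓ : ℕ) < t / 2) Finset.univ)
      (fun ℓ => τ ≤ v (a ℓ))
  -- the A-count is at least G.card
  have hAcount : G.card ≤ (A.filter (fun j => τ ≤ v j)).card := by
    rw [← Finset.card_image_of_injOn (ha.injOn.mono (Set.subset_univ _))]
    apply Finset.card_le_card
    intro j hj
    simp only [Finset.mem_image] at hj
    obtain ⟨ℓ, hℓ, rfl⟩ := hj
    simp only [hG, Finset.mem_filter, Finset.mem_univ, true_and] at hℓ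
    simp only [Finset.mem_filter]
    exact ⟨by rw [hA]; exact Finset.mem_image_of_mem a (Finset.mem_univ ℓ), hℓ.2⟩
  -- each bad pick contributes many inversions
  have hcardS : ∀ ℓ ∈ L, t - (2 * (ℓ : ℕ) + 1) ≤
      (In.filter (fun pr => pr.2 = σ.symm (a ℓ))).card := by
    intro ℓ hℓ
    simp only [hLdef, Finset.mem_filter, Finset.mem_univ, true_and] at hℓ
    obtain ⟨hℓt, hℓv⟩ := hℓ
    set r := σ.symm (a ℓ) with hrdef
    set p := π.symm (a ℓ) with hpdef
    have hσr : σ r = a ℓ := σ.apply_symm_apply _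
    have hr : t ≤ (r : ℕ) := by
      by_contra hc
      push_neg at hc
      exact hℓv (by rw [← hσr]; exact (hAiff r).mpr hc)
    have hp : (p : ℕ) < 2 * ((ℓ : ℕ) + 1) := haRR ℓ
    set T := Finset.filter (fun k : Fin m => (k : ℕ) < (r : ℕ)) Finset.univ with hT
    have hTcard : T.card = (r : ℕ) := aux_card_filter_lt m _ (le_of_lt r.isLt)
    have h12 : (T.filter (fun k => p < π.symm (σ k))).card +
        (T.filter (fun k => ¬ p < π.symm (σ k))).card = T.card :=
      Finset.card_filter_add_card_filter_not _
    have hT2 : (T.filter (fun k => ¬ p < π.symm (σ k))).card ≤ (p : ℕ) := by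
      have hle : (T.filter (fun k => ¬ p < π.symm (σ k))).card ≤
          (Finset.filter (fun x : Fin m => (x : ℕ) < (p : ℕ)) Finset.univ).card := by
        apply Finset.card_le_card_of_injOn (fun k => π.symm (σ k))
        · intro k hk
          simp only [hT, Finset.mem_coe, Finset.mem_filter, Finset.mem_univ, true_and, not_lt] at hk
          simp only [Finset.mem_coe, Finset.mem_filter, Finset.mem_univ, true_and]
          have hne : π.symm (σ k) ≠ p := by
            intro he
            have h1 : σ k = a ℓ := π.symm.injective (by rw [he, hpdef])
            have h2 : k = r := by rw [hrdef, ← h1, Equiv.symm_apply_apply]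
            omega
          exact lt_of_le_of_ne hk.2 (fun he => hne (Fin.ext he))
        · intro k _ k' _ h
          exact σ.injective (π.symm.injective h)
      rwa [aux_card_filter_lt m _ (le_of_lt p.isLt)] at hle
    have hT1 : (T.filter (fun k => p < π.symm (σ k))).card ≤
        (In.filter (fun pr => pr.2 = r)).card := by
      apply Finset.card_le_card_of_injOn (fun k => (k, r))
      · intro k hk
        simp only [hT, Finset.mem_coe, Finset.mem_filter, Finset.mem_univ, true_and] at hk
        simp only [hIn, Finset.mem_coe, Finset.mem_filter, Finset.mem_univ, true_and]
        refine ⟨⟨?_, ?_⟩, trivial⟩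
        · exact Fin.lt_def.mpr hk.1
        · rw [hσr]; exact hk.2
      · intro k _ k' _ h
        exact (Prod.ext_iff.mp h).1
    omega
  -- disjointness and the inversion bound
  have hdisj : ∀ ℓ ∈ L, ∀ ℓ' ∈ L, ℓ ≠ ℓ' →
      Disjoint (In.filter (fun pr => pr.2 = σ.symm (a ℓ)))
        (In.filter (fun pr => pr.2 = σ.symm (a ℓ'))) := by
    intro ℓ _ ℓ' _ hne
    apply Finset.disjoint_left.mpr
    intro pr h1 h2
    simp only [Finset.mem_filter] at h1 h2
    exact hne (ha (σ.symm.injective (h1.2 ▸ h2.2 ▸ rfl)))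
  have hsum : ∑ ℓ ∈ L, (t - (2 * (ℓ : ℕ) + 1)) ≤ In.card := by
    calc ∑ ℓ ∈ L, (t - (2 * (ℓ : ℕ) + 1))
        ≤ ∑ ℓ ∈ L, (In.filter (fun pr => pr.2 = σ.symm (a ℓ))).card :=
          Finset.sum_le_sum hcardS
      _ = (L.biUnion (fun ℓ => In.filter (fun pr => pr.2 = σ.symm (a ℓ)))).card :=
          (Finset.card_biUnion hdisj).symm
      _ ≤ In.card := Finset.card_le_card
          (Finset.biUnion_subset.mpr (fun ℓ _ => Finset.filter_subset _ _))
  -- lower bound on the sum: L.card squared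
  have hlow : L.card * L.card ≤ ∑ ℓ ∈ L, (t - (2 * (ℓ : ℕ) + 1)) := by
    have hmem : ∀ ℓ ∈ L, (ℓ : ℕ) < t / 2 := by
      intro ℓ hℓ
      simp only [hLdef, Finset.mem_filter, Finset.mem_univ, true_and] at hℓ
      exact hℓ.1
    have hinj : Set.InjOn (fun ℓ : Fin q => t / 2 - 1 - (ℓ : ℕ)) L := by
      intro x hx y hy hxy
      have hx' := hmem x hx
      have hy' := hmem y hy
      simp only at hxy
      exact Fin.ext (by omega)
    have himg : (L.image (fun ℓ : Fin q => t / 2 - 1 - (ℓ : ℕ))).card = L.card :=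
      Finset.card_image_of_injOn hinj
    have hstep : ∑ n ∈ L.image (fun ℓ : Fin q => t / 2 - 1 - (ℓ : ℕ)), (2 * n + 1) =
        ∑ ℓ ∈ L, (2 * (t / 2 - 1 - (ℓ : ℕ)) + 1) :=
      Finset.sum_image (fun x hx y hy h => hinj hx hy h)
    have hsq := aux_sum_sq L.card _ himg
    rw [hstep] at hsq
    refine le_trans hsq (Finset.sum_le_sum ?_)
    intro ℓ hℓ
    have := hmem ℓ hℓ
    omega
  -- combine: L.card ≤ √d
  have hLd : (L.card : ℝ) ≤ Real.sqrt d := by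
    have h1 : ((L.card * L.card : ℕ) : ℝ) ≤ d := by
      refine le_trans ?_ hd
      exact_mod_cast le_trans hlow hsum
    have h2 : ((L.card : ℝ)) ^ 2 ≤ d := by push_cast at h1; nlinarith
    calc (L.card : ℝ) = Real.sqrt ((L.card : ℝ) ^ 2) :=
          (Real.sqrt_sq (Nat.cast_nonneg _)).symm
      _ ≤ Real.sqrt d := Real.sqrt_le_sqrt h2
  -- finish
  rw [hRcount]
  have hcast : ((t / 2 : ℕ) : ℝ) = (G.card : ℝ) + (L.card : ℝ) := by
    exact_mod_cast hGL.symm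
  have hA' : (G.card : ℝ) ≤ ((A.filter (fun j => τ ≤ v j)).card : ℝ) := by
    exact_mod_cast hAcount
  linarith
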